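/- Let R be a commutative ring and let K be a chain complex of free R-modules such that for every degree the image of the differential is a free R-module. If K is acyclic (all homology modules of K vanish), then for every R-module M the chain complex K ⊗_R M is acyclic. -/

import Mathlib

open CategoryTheory Limits MonoidalCategory

universe u

/-- Let `K` be an acyclic chain complex of free `R`-modules such that the
image of each differential is free. Then for every `R`-module `M` the complex `K ⊗_R M`
is acyclic. -/
theorem stmt12 (R : Type u) [CommRing R]
    (K : ChainComplex (ModuleCat.{u} R) ℤ)
    (hfree : ∀ i : ℤ, Module.Free R (K.X i))
    (him : ∀ i : ℤ, Module.Free R (LinearMap.range (K.d i (i - 1)).hom))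
    (hacyclic : ∀ i : ℤ, IsZero (K.homology i))
    (M : Type u) [AddCommGroup M] [Module R M] :
    ∀ i : ℤ, IsZero ((((tensorRight (ModuleCat.of R M)).mapHomologicalComplex
        (ComplexShape.down ℤ)).obj K).homology i) := by
  -- kernel ⊆ range from acyclicity
  have hker : ∀ (i j : ℤ), j = i + 1 → ∀ x : K.X i, K.d i (i - 1) x = 0 →
      x ∈ LinearMap.range (K.d j i).hom := by
    intro i j hj x hx
    subst hj
    have h1 : K.ExactAt i := (K.exactAt_iff_isZero_homology i).2 (hacyclic i)
    rw [K.exactAt_iff' (i+1) i (i-1) (by simp) (by simp)] at h1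
    obtain ⟨y, hy⟩ := (ShortComplex.moduleCat_exact_iff _).1 h1 x hx
    exact ⟨y, hy⟩
  -- sections of the differentials onto their images
  have sec : ∀ (i j : ℤ), i = j + 1 →
      ∃ s : ↥(LinearMap.range (K.d i j).hom) →ₗ[R] K.X i,
        ∀ x, (K.d i j) (s x) = (x : K.X j) := by
    intro i j hij
    obtain rfl : j = i - 1 := by omega
    haveI := him i
    obtain ⟨s, hs⟩ := Module.projective_lifting_property
      (LinearMap.rangeRestrict (K.d i (i-1)).hom) LinearMap.id (LinearMap.surjective_rangeRestrict (K.d i (i-1)).hom)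
    refine ⟨s, fun x => ?_⟩
    have := congrArg Subtype.val (DFunLike.congr_fun hs x)
    simpa using this
  -- choose the sections
  choose sig hsig using sec
  -- the homotopy components
  have key : ∀ (i j : ℤ) (h : i + 1 = j),
      ∃ hmap : K.X i →ₗ[R] K.X j,
        (∀ x : K.X i, K.d j i (hmap x) =
          x - sig i (i-1) (by omega) ⟨K.d i (i-1) x, LinearMap.mem_range_self _ x⟩) ∧
        (∀ x : K.X i, (hx : K.d i (i-1) x = 0) →
          hmap x = sig j i (by omega) ⟨x, hker i j h.symm x hx⟩) := by
    intro i j h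
    subst h
    set s₁ := sig i (i-1) (by omega) with hs₁
    have hq : ∀ x : K.X i,
        x - s₁ ⟨K.d i (i-1) x, LinearMap.mem_range_self _ x⟩ ∈
          LinearMap.range (K.d (i+1) i).hom := by
      intro x
      apply hker i (i+1) rfl
      have h1 : K.d i (i-1) (s₁ ⟨K.d i (i-1) x, LinearMap.mem_range_self _ x⟩)
          = K.d i (i-1) x := hsig i (i-1) (by omega) _
      simp [map_sub, h1]
    let q : K.X i →ₗ[R] K.X i :=
      LinearMap.id - s₁.comp (LinearMap.rangeRestrict (K.d i (i-1)).hom)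
    let q' : K.X i →ₗ[R] ↥(LinearMap.range (K.d (i+1) i).hom) :=
      q.codRestrict _ (fun x => hq x)
    refine ⟨(sig (i+1) i rfl).comp q', fun x => ?_, fun x hx => ?_⟩
    · have := hsig (i+1) i rfl (q' x)
      exact this
    · show sig (i+1) i rfl (q' x) = _
      congr 1
      ext
      show x - s₁ ⟨K.d i (i-1) x, _⟩ = x
      rw [show (⟨K.d i (i-1) x, LinearMap.mem_range_self _ x⟩ :
        ↥(LinearMap.range (K.d i (i-1)).hom)) = 0 from Subtype.ext hx]
      simp
  choose hmap hmap1 hmap2 using key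
  -- contracting homotopy
  have hcontr : Homotopy (𝟙 K) 0 := by
    refine
      { hom := fun i j => if h : i + 1 = j then ModuleCat.ofHom (hmap i j h) else 0
        zero := fun i j hij => dif_neg (fun h => hij h)
        comm := fun i => ?_ }
    rw [dNext_eq _ (show (ComplexShape.down ℤ).Rel i (i-1) by simp),
      prevD_eq _ (show (ComplexShape.down ℤ).Rel (i+1) i by simp)]
    rw [dif_pos (show (i-1) + 1 = i by omega), dif_pos rfl]
    refine ModuleCat.hom_ext (LinearMap.ext fun x => ?_)
    have e1 : (K.d i (i-1) ≫ ModuleCat.ofHom (hmap (i-1) i (by omega))) x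
        = hmap (i-1) i (by omega) (K.d i (i-1) x) := rfl
    have e2 : (ModuleCat.ofHom (hmap i (i+1) rfl) ≫ K.d (i+1) i) x
        = K.d (i+1) i (hmap i (i+1) rfl x) := rfl
    have hdd : K.d (i-1) ((i-1)-1) (K.d i (i-1) x) = 0 := by
      have := K.d_comp_d i (i-1) ((i-1)-1)
      calc K.d (i-1) ((i-1)-1) (K.d i (i-1) x)
          = (K.d i (i-1) ≫ K.d (i-1) ((i-1)-1)) x := rfl
        _ = 0 := by rw [this]; rfl
    show x = _
    have eadd : ∀ (f g : K.X i ⟶ K.X i) (y : K.X i), (f + g) y = f y + g y := fun _ _ _ => rfl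
    simp only [HomologicalComplex.zero_f, add_zero]
    rw [eadd, e1, e2, hmap2 (i-1) i (by omega) _ hdd, hmap1 i (i+1) rfl x]
    have : sig i (i-1) (by omega : i = (i-1)+1)
        ⟨K.d i (i-1) x, hker (i-1) i (by omega) (K.d i (i-1) x) hdd⟩
      = sig i (i-1) (by omega) ⟨K.d i (i-1) x, LinearMap.mem_range_self _ x⟩ := rfl
    rw [this]
    abel
  intro i
  set F := (tensorRight (ModuleCat.of R M)).mapHomologicalComplex (ComplexShape.down ℤ)
    with hF
  have h2 := Functor.mapHomotopy (tensorRight (ModuleCat.of R M)) hcontr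
  have h3 : Homotopy (𝟙 (F.obj K)) (0 : F.obj K ⟶ F.obj K) :=
    (Homotopy.ofEq (F.map_id K).symm).trans (h2.trans (Homotopy.ofEq (F.map_zero K K)))
  rw [IsZero.iff_id_eq_zero, ← HomologicalComplex.homologyMap_id,
    h3.homologyMap_eq, HomologicalComplex.homologyMap_zero]
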